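/- Let G be a finite simple graph and M a maximum matching of G. If w₁ and w₂ are distinct bad vertices with respect to M, then there is no single edge uv ∈ M such that w₁ is adjacent to both u and v and w₂ is adjacent to both u and v; that is, no two bad vertices share a common matching edge. -/

import Mathlib

open SimpleGraph

/-- A total cover of a simple graph `G`: a pair of a vertex set `SV` and an edge set
`SE ⊆ E(G)` such that every vertex not in `SV` is adjacent to a vertex of `SV` or is an
endpoint of an edge of `SE`, and every edge not in `SE` has an endpoint in `SV` or shares
an endpoint with an edge of `SE`. -/
def IsTotalCover {V : Type*} (G : SimpleGraph V) (SV : Set V) (SE : Set (Sym2 V)) : Prop :=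
  SE ⊆ G.edgeSet ∧
  (∀ v : V, v ∉ SV → (∃ u ∈ SV, G.Adj v u) ∨ (∃ e ∈ SE, v ∈ e)) ∧
  (∀ e ∈ G.edgeSet, e ∉ SE → (∃ v ∈ SV, v ∈ e) ∨ (∃ f ∈ SE, ∃ v : V, v ∈ e ∧ v ∈ f))

/-- A matching of `G`: a set of edges of `G` that are pairwise vertex-disjoint. -/
def IsMatchingSet {V : Type*} (G : SimpleGraph V) (M : Set (Sym2 V)) : Prop :=
  M ⊆ G.edgeSet ∧ ∀ e ∈ M, ∀ f ∈ M, e ≠ f → ∀ v : V, v ∈ e → v ∉ f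

/-- A maximum matching of `G`: a matching of largest cardinality. -/
def IsMaximumMatching {V : Type*} (G : SimpleGraph V) (M : Set (Sym2 V)) : Prop :=
  IsMatchingSet G M ∧ ∀ M' : Set (Sym2 V), IsMatchingSet G M' → M'.ncard ≤ M.ncard

/-- A vertex is covered by a matching `M` if it is an endpoint of some edge of `M`. -/
def CoveredBy {V : Type*} (M : Set (Sym2 V)) (v : V) : Prop :=
  ∃ e ∈ M, v ∈ e

/-- A bad vertex with respect to a matching `M`: a vertex not covered by `M` which is
adjacent to both endpoints of some edge of `M`. -/
def IsBad {V : Type*} (G : SimpleGraph V) (M : Set (Sym2 V)) (w : V) : Prop :=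
  ¬ CoveredBy M w ∧ ∃ u v : V, s(u, v) ∈ M ∧ G.Adj w u ∧ G.Adj w v

/-- An isolated vertex: a vertex of degree 0, i.e. adjacent to no vertex. -/
def IsIsolated {V : Type*} (G : SimpleGraph V) (v : V) : Prop :=
  ∀ u : V, ¬ G.Adj v u

/-- The total graph `T(G)` of `G`: its vertices are the vertices and edges of `G`, with
adjacency given by adjacency/incidence in `G`. -/
def totalGraph {V : Type*} (G : SimpleGraph V) : SimpleGraph (V ⊕ G.edgeSet) where
  Adj x y :=
    match x, y with
    | .inl a, .inl b => G.Adj a b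
    | .inl a, .inr e => a ∈ e.1
    | .inr e, .inl a => a ∈ e.1
    | .inr e, .inr f => e ≠ f ∧ ∃ v : V, v ∈ e.1 ∧ v ∈ f.1
  symm := by
    refine ⟨?_⟩
    rintro (a | e) (b | f) h
    · exact h.symm
    · exact h
    · exact h
    · exact ⟨h.1.symm, by obtain ⟨v, h1, h2⟩ := h.2; exact ⟨v, h2, h1⟩⟩
  loopless := by
    refine ⟨?_⟩
    rintro (a | e) h
    · exact G.loopless.irrefl a h
    · exact h.1 rfl

/-- no two distinct bad vertices (with respect to a maximum matching `M`)
share a common matching edge. -/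
theorem stmt_7 {V : Type*} [Fintype V] (G : SimpleGraph V)
    (M : Set (Sym2 V)) (hM : IsMaximumMatching G M)
    (w₁ w₂ : V) (hw₁ : IsBad G M w₁) (hw₂ : IsBad G M w₂) (hne : w₁ ≠ w₂) :
    ¬ ∃ u v : V, s(u, v) ∈ M ∧
      (G.Adj w₁ u ∧ G.Adj w₁ v) ∧ (G.Adj w₂ u ∧ G.Adj w₂ v) := by
  rintro ⟨u, v, huv, ⟨h1u, h1v⟩, ⟨h2u, h2v⟩⟩
  obtain ⟨⟨hMsub, hMdisj⟩, hMmax⟩ := hM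
  have hAdjuv : G.Adj u v := hMsub huv
  have huv_ne : u ≠ v := hAdjuv.ne
  have hw1u : w₁ ≠ u := h1u.ne
  have hw1v : w₁ ≠ v := h1v.ne
  have hw2u : w₂ ≠ u := h2u.ne
  have hw2v : w₂ ≠ v := h2v.ne
  have hw1unc : ∀ e ∈ M, w₁ ∉ e := by
    intro e he hmem; exact hw₁.1 ⟨e, he, hmem⟩
  have hw2unc : ∀ e ∈ M, w₂ ∉ e := by
    intro e he hmem; exact hw₂.1 ⟨e, he, hmem⟩
  -- u and v are not in any other edge of M
  have hu_only : ∀ e ∈ M, e ≠ s(u, v) → u ∉ e := by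
    intro e he hene hmem
    exact hMdisj e he s(u,v) huv hene u hmem (Sym2.mem_mk_left u v)
  have hv_only : ∀ e ∈ M, e ≠ s(u, v) → v ∉ e := by
    intro e he hene hmem
    exact hMdisj e he s(u,v) huv hene v hmem (Sym2.mem_mk_right u v)
  set e₁ : Sym2 V := s(w₁, u) with he₁
  set e₂ : Sym2 V := s(w₂, v) with he₂
  set M' : Set (Sym2 V) := insert e₁ (insert e₂ (M \ {s(u, v)})) with hM'
  have he1ne2 : e₁ ≠ e₂ := by
    intro h
    rw [he₁, he₂, Sym2.eq, Sym2.rel_iff'] at h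
    rcases h with h | h
    · exact hne (congrArg Prod.fst h)
    · exact hw1v (congrArg Prod.fst h)
  have he1M : e₁ ∉ M := fun h => hw1unc e₁ h (Sym2.mem_mk_left _ _)
  have he2M : e₂ ∉ M := fun h => hw2unc e₂ h (Sym2.mem_mk_left _ _)
  -- helper: membership in M'
  have hmemM' : ∀ f ∈ M', f = e₁ ∨ f = e₂ ∨ (f ∈ M ∧ f ≠ s(u, v)) := by
    intro f hf
    rcases hf with h | h | ⟨h1, h2⟩
    · exact Or.inl h
    · exact Or.inr (Or.inl h)
    · exact Or.inr (Or.inr ⟨h1, h2⟩)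
  have hmatch : IsMatchingSet G M' := by
    constructor
    · intro f hf
      rcases hmemM' f hf with rfl | rfl | ⟨h1, _⟩
      · exact h1u
      · exact h2v
      · exact hMsub h1
    · intro f hf g hg hfg x hxf hxg
      have key : ∀ a, a ∈ e₁ ↔ (a = w₁ ∨ a = u) := fun a => Sym2.mem_iff
      have key2 : ∀ a, a ∈ e₂ ↔ (a = w₂ ∨ a = v) := fun a => Sym2.mem_iff
      rcases hmemM' f hf with rfl | rfl | ⟨hfM, hfne⟩ <;>
        rcases hmemM' g hg with rfl | rfl | ⟨hgM, hgne⟩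
      · exact hfg rfl
      · rcases (key x).1 hxf with rfl | rfl <;> rcases (key2 x).1 hxg with h | h
        · exact hne h
        · exact hw1v h
        · exact hw2u h.symm
        · exact huv_ne h
      · rcases (key x).1 hxf with rfl | rfl
        · exact hw1unc g hgM hxg
        · exact hu_only g hgM hgne hxg
      · rcases (key2 x).1 hxf with rfl | rfl <;> rcases (key x).1 hxg with h | h
        · exact hne h.symm
        · exact hw2u h
        · exact hw1v h.symm
        · exact huv_ne h.symm
      · exact hfg rfl
      · rcases (key2 x).1 hxf with rfl | rfl
        · exact hw2unc g hgM hxg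
        · exact hv_only g hgM hgne hxg
      · rcases (key x).1 hxg with rfl | rfl
        · exact hw1unc f hfM hxf
        · exact hu_only f hfM hfne hxf
      · rcases (key2 x).1 hxg with rfl | rfl
        · exact hw2unc f hfM hxf
        · exact hv_only f hfM hfne hxf
      · exact hMdisj f hfM g hgM hfg x hxf hxg
  have hfinM : M.Finite := Set.toFinite M
  have hfin : (M \ {s(u, v)}).Finite := hfinM.diff
  have h1 : e₁ ∉ insert e₂ (M \ {s(u, v)}) := by
    intro h
    rcases h with h | ⟨h, _⟩
    · exact he1ne2 h
    · exact he1M h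
  have h2 : e₂ ∉ M \ {s(u, v)} := fun ⟨h, _⟩ => he2M h
  have hcard : M'.ncard = M.ncard + 1 := by
    rw [hM', Set.ncard_insert_of_notMem h1 (hfin.insert _),
      Set.ncard_insert_of_notMem h2 hfin,
      Set.ncard_diff_singleton_of_mem huv]
    have : 0 < M.ncard := (Set.ncard_pos hfinM).2 ⟨_, huv⟩
    omega
  have := hMmax M' hmatch
  omega
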